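/- Define π(U₁, U₂) = g(U₁) · P · g(U₂) · Pᵀ for U₁, U₂ ∈ SU(2). Then π(U₁, U₂) is a 4 × 4 real orthogonal matrix with determinant 1 (an element of SO(4)), and π is a group homomorphism from SU(2) × SU(2) to SO(4): π(U₁V₁, U₂V₂) = π(U₁, U₂)·π(V₁, V₂) for all U₁, U₂, V₁, V₂ ∈ SU(2). -/

import Mathlib

/-- The realification map `g` for `2 × 2` complex matrices: the `4 × 4` real matrix
obtained by replacing each entry `a + ib` by the `2 × 2` real block `[[a, -b], [b, a]]`. -/
def gmap (M : Matrix (Fin 2) (Fin 2) ℂ) : Matrix (Fin 4) (Fin 4) ℝ :=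
  Matrix.of fun i j =>
    let a : ℂ := M ⟨i.val / 2, by omega⟩ ⟨j.val / 2, by omega⟩
    if i.val % 2 = 0 then (if j.val % 2 = 0 then a.re else -a.im)
    else (if j.val % 2 = 0 then a.im else a.re)

/-- The orthogonal matrix `P = (1/√2)·[[1,1,0,0],[−1,1,0,0],[0,0,1,1],[0,0,1,−1]]`. -/
noncomputable def Pmat : Matrix (Fin 4) (Fin 4) ℝ :=
  (1 / Real.sqrt 2) • !![1, 1, 0, 0; -1, 1, 0, 0; 0, 0, 1, 1; 0, 0, 1, -1]

/-- The map `π(U₁, U₂) = g(U₁) · P · g(U₂) · Pᵀ`. -/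
noncomputable def piMap (U₁ U₂ : Matrix (Fin 2) (Fin 2) ℂ) : Matrix (Fin 4) (Fin 4) ℝ :=
  gmap U₁ * Pmat * gmap U₂ * Pmat.transpose

/-! ### Auxiliary lemmas -/

lemma fv2 : ((2 : Fin 4) : ℕ) = 2 := rfl
lemma fv3 : ((3 : Fin 4) : ℕ) = 3 := rfl

/-- The real `4 × 4` matrix corresponding to the SU(2)-shaped complex matrix with
`a = x + iy`, `b = z + iw`. -/
def Gmat (x y z w : ℝ) : Matrix (Fin 4) (Fin 4) ℝ :=
  !![x,-y,z,-w; y,x,w,z; -z,-w,x,y; w,-z,-y,x]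

def Qmat : Matrix (Fin 4) (Fin 4) ℝ := !![1, 1, 0, 0; -1, 1, 0, 0; 0, 0, 1, 1; 0, 0, 1, -1]

def Qt : Matrix (Fin 4) (Fin 4) ℝ := !![1, -1, 0, 0; 1, 1, 0, 0; 0, 0, 1, 1; 0, 0, 1, -1]

lemma Qmat_transpose : Qmat.transpose = Qt := by
  ext i j
  fin_cases i <;> fin_cases j <;> rfl

lemma QQt : Qmat * Qmat.transpose = (2:ℝ) • 1 := by
  rw [Qmat_transpose]
  ext i j
  fin_cases i <;> fin_cases j <;>
    simp [Qmat, Qt, Matrix.mul_apply, Fin.sum_univ_four, Matrix.one_apply,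
      Matrix.vecHead, Matrix.vecTail] <;> norm_num

lemma Gmat_transpose (x y z w : ℝ) :
    (Gmat x y z w).transpose = Gmat x (-y) (-z) (-w) := by
  ext i j
  fin_cases i <;> fin_cases j <;> simp [Gmat]

set_option maxHeartbeats 1000000 in
lemma Gmat_orth (x y z w : ℝ) (h : x^2 + y^2 + z^2 + w^2 = 1) :
    (Gmat x y z w).transpose * Gmat x y z w = 1 := by
  rw [Gmat_transpose]
  ext i j
  fin_cases i <;> fin_cases j <;>
    · simp [Gmat, Matrix.mul_apply, Fin.sum_univ_four, Matrix.one_apply]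
      first | linear_combination h | ring

set_option maxHeartbeats 1000000 in
lemma Gmat_det (x y z w : ℝ) (h : x^2 + y^2 + z^2 + w^2 = 1) :
    (Gmat x y z w).det = 1 := by
  rw [show (1:ℝ) = (x^2+y^2+z^2+w^2)^2 by rw [h]; ring]
  simp [Gmat, Matrix.det_succ_row_zero, Fin.sum_univ_succ, Fin.succAbove]
  ring

set_option maxHeartbeats 2000000 in
lemma Gmat_comm (x y z w x' y' z' w' : ℝ) :
    Gmat x y z w * (Qmat * Gmat x' y' z' w' * Qmat.transpose)
      = (Qmat * Gmat x' y' z' w' * Qmat.transpose) * Gmat x y z w := by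
  rw [Qmat_transpose]
  ext i j
  fin_cases i <;> fin_cases j <;>
    · simp [Gmat, Qmat, Qt, Matrix.mul_apply, Fin.sum_univ_four]
      ring

lemma gmap_eta (a b : ℂ) :
    gmap !![a, b; -(starRingEnd ℂ) b, (starRingEnd ℂ) a] = Gmat a.re a.im b.re b.im := by
  ext i j
  fin_cases i <;> fin_cases j <;> first | rfl | simp [gmap, Gmat, fv2, fv3]

set_option maxHeartbeats 1000000 in
lemma gmap_mul (M N : Matrix (Fin 2) (Fin 2) ℂ) : gmap (M * N) = gmap M * gmap N := by
  ext i j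
  fin_cases i <;> fin_cases j <;>
    · simp only [gmap, Matrix.mul_apply, Matrix.of_apply, Fin.sum_univ_two, Fin.sum_univ_four]
      norm_num [fv2, fv3, Complex.add_re, Complex.add_im, Complex.mul_re, Complex.mul_im]
      ring

lemma su2_shape (U : Matrix (Fin 2) (Fin 2) ℂ) (h1 : U.conjTranspose * U = 1) (h2 : U.det = 1) :
    U 1 1 = (starRingEnd ℂ) (U 0 0) ∧ U 1 0 = -(starRingEnd ℂ) (U 0 1) ∧
      Complex.normSq (U 0 0) + Complex.normSq (U 0 1) = 1 := by
  have h1' : U * U.conjTranspose = 1 := mul_eq_one_comm.mp h1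
  have hadj : U.conjTranspose = U.adjugate := by
    have ha : U.adjugate * U = 1 := by rw [Matrix.adjugate_mul, h2, one_smul]
    calc U.conjTranspose = 1 * U.conjTranspose := (one_mul _).symm
      _ = U.adjugate * U * U.conjTranspose := by rw [ha]
      _ = U.adjugate * (U * U.conjTranspose) := by rw [mul_assoc]
      _ = U.adjugate := by rw [h1', mul_one]
  have hadj2 : U.adjugate = !![U 1 1, -(U 0 1); -(U 1 0), U 0 0] := by
    rw [show U = !![U 0 0, U 0 1; U 1 0, U 1 1] from (Matrix.etaExpand_eq U).symm,
      Matrix.adjugate_fin_two]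
  have e00 : (starRingEnd ℂ) (U 0 0) = U 1 1 := by
    have := congrFun (congrFun hadj 0) 0
    simpa [Matrix.conjTranspose_apply, hadj2] using this
  have e01 : (starRingEnd ℂ) (U 1 0) = -(U 0 1) := by
    have := congrFun (congrFun hadj 0) 1
    simpa [Matrix.conjTranspose_apply, hadj2] using this
  have e10 : U 1 0 = -(starRingEnd ℂ) (U 0 1) := by
    have h := congrArg (starRingEnd ℂ) e01
    rw [RingHom.map_neg, Complex.conj_conj] at h
    linear_combination h
  refine ⟨e00.symm, e10, ?_⟩
  have hn : (U * U.conjTranspose) 0 0 = 1 := by rw [h1']; simp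
  rw [Matrix.mul_apply, Fin.sum_univ_two] at hn
  simp only [Matrix.conjTranspose_apply] at hn
  rw [show star (U 0 0) = (starRingEnd ℂ) (U 0 0) from rfl,
    show star (U 0 1) = (starRingEnd ℂ) (U 0 1) from rfl,
    Complex.mul_conj, Complex.mul_conj] at hn
  exact_mod_cast hn

/-- For an SU(2) matrix `U`, `gmap U` is of the form `Gmat x y z w` with
`x² + y² + z² + w² = 1`. -/
lemma su2_gmap (U : Matrix (Fin 2) (Fin 2) ℂ) (h1 : U.conjTranspose * U = 1) (h2 : U.det = 1) :
    ∃ x y z w : ℝ, x^2 + y^2 + z^2 + w^2 = 1 ∧ gmap U = Gmat x y z w := by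
  obtain ⟨h11, h10, hn⟩ := su2_shape U h1 h2
  refine ⟨(U 0 0).re, (U 0 0).im, (U 0 1).re, (U 0 1).im, ?_, ?_⟩
  · rw [Complex.normSq_apply, Complex.normSq_apply] at hn
    linear_combination hn
  · have hUeq : U = !![U 0 0, U 0 1;
        -(starRingEnd ℂ) (U 0 1), (starRingEnd ℂ) (U 0 0)] := by
      rw [← h11, ← h10]
      exact (Matrix.etaExpand_eq U).symm
    conv_lhs => rw [hUeq, gmap_eta]

lemma Pmat_eq : Pmat = (1 / Real.sqrt 2) • Qmat := rfl

lemma PPt : Pmat * Pmat.transpose = 1 := by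
  rw [Pmat_eq, Matrix.transpose_smul, Matrix.smul_mul, Matrix.mul_smul, smul_smul, QQt,
    smul_smul]
  rw [show 1 / Real.sqrt 2 * (1 / Real.sqrt 2) * 2 = (Real.sqrt 2 * Real.sqrt 2)⁻¹ * 2 by
    ring, Real.mul_self_sqrt (by norm_num)]
  norm_num

lemma PtP : Pmat.transpose * Pmat = 1 := mul_eq_one_comm.mp PPt

/-- Conjugation `P · gmap U · Pᵀ` commutes with `gmap V` for SU(2)-shaped matrices. -/
lemma P_comm (x y z w x' y' z' w' : ℝ) :
    Gmat x y z w * (Pmat * Gmat x' y' z' w' * Pmat.transpose)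
      = (Pmat * Gmat x' y' z' w' * Pmat.transpose) * Gmat x y z w := by
  have hP : Pmat * Gmat x' y' z' w' * Pmat.transpose
      = ((1 / Real.sqrt 2) * (1 / Real.sqrt 2)) • (Qmat * Gmat x' y' z' w' * Qmat.transpose) := by
    rw [Pmat_eq, Matrix.transpose_smul, Matrix.smul_mul, Matrix.smul_mul, Matrix.mul_smul,
      smul_smul]
  rw [hP, mul_smul_comm, smul_mul_assoc, Gmat_comm]

lemma orth_mul {A B : Matrix (Fin 4) (Fin 4) ℝ} (hA : A.transpose * A = 1)
    (hB : B.transpose * B = 1) : (A * B).transpose * (A * B) = 1 := by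
  rw [Matrix.transpose_mul, mul_assoc, ← mul_assoc A.transpose, hA, one_mul, hB]

lemma hom_aux {M : Type*} [Monoid M] (u1 v1 u2 v2 p pt : M) (hpt : pt * p = 1)
    (hc : v1 * (p * u2 * pt) = (p * u2 * pt) * v1) :
    u1 * v1 * p * (u2 * v2) * pt = u1 * p * u2 * pt * (v1 * p * v2 * pt) := by
  have h1 : u1 * p * u2 * pt * (v1 * p * v2 * pt)
      = u1 * ((p * u2 * pt) * v1) * (p * v2 * pt) := by
    simp only [mul_assoc]
  rw [h1, ← hc]
  simp only [mul_assoc]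
  rw [← mul_assoc pt p, hpt, one_mul]

theorem stmt_14 :
    (∀ U₁ U₂ : Matrix (Fin 2) (Fin 2) ℂ,
      U₁.conjTranspose * U₁ = 1 ∧ U₁.det = 1 →
      U₂.conjTranspose * U₂ = 1 ∧ U₂.det = 1 →
      (piMap U₁ U₂).transpose * piMap U₁ U₂ = 1 ∧ (piMap U₁ U₂).det = 1) ∧
    (∀ U₁ U₂ V₁ V₂ : Matrix (Fin 2) (Fin 2) ℂ,
      U₁.conjTranspose * U₁ = 1 ∧ U₁.det = 1 →
      U₂.conjTranspose * U₂ = 1 ∧ U₂.det = 1 →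
      V₁.conjTranspose * V₁ = 1 ∧ V₁.det = 1 →
      V₂.conjTranspose * V₂ = 1 ∧ V₂.det = 1 →
      piMap (U₁ * V₁) (U₂ * V₂) = piMap U₁ U₂ * piMap V₁ V₂) := by
  constructor
  · rintro U₁ U₂ ⟨h1, h1d⟩ ⟨h2, h2d⟩
    obtain ⟨x1, y1, z1, w1, hn1, hg1⟩ := su2_gmap U₁ h1 h1d
    obtain ⟨x2, y2, z2, w2, hn2, hg2⟩ := su2_gmap U₂ h2 h2d
    have hG1 := Gmat_orth x1 y1 z1 w1 hn1
    have hG2 := Gmat_orth x2 y2 z2 w2 hn2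
    have hPtt : Pmat.transpose.transpose * Pmat.transpose = 1 := by
      rw [Matrix.transpose_transpose]; exact PPt
    constructor
    · unfold piMap
      rw [hg1, hg2]
      exact orth_mul (orth_mul (orth_mul hG1 PtP) hG2) hPtt
    · unfold piMap
      rw [hg1, hg2]
      have hd : Pmat.det * Pmat.transpose.det = 1 := by
        rw [← Matrix.det_mul, PPt, Matrix.det_one]
      rw [Matrix.det_mul, Matrix.det_mul, Matrix.det_mul,
        Gmat_det x1 y1 z1 w1 hn1, Gmat_det x2 y2 z2 w2 hn2]
      linear_combination hd
  · rintro U₁ U₂ V₁ V₂ ⟨h1, h1d⟩ ⟨h2, h2d⟩ ⟨h3, h3d⟩ ⟨h4, h4d⟩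
    obtain ⟨x2, y2, z2, w2, hn2, hg2⟩ := su2_gmap U₂ h2 h2d
    obtain ⟨x3, y3, z3, w3, hn3, hg3⟩ := su2_gmap V₁ h3 h3d
    unfold piMap
    rw [gmap_mul U₁ V₁, gmap_mul U₂ V₂]
    refine hom_aux _ _ _ _ _ _ PtP ?_
    rw [hg2, hg3]
    exact P_comm x3 y3 z3 w3 x2 y2 z2 w2
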